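/- For every x ∈ f_σ([0,1]) that is not a dyadic rational (and not 0), the fiber f_σ^{-1}(x) is uncountable. -/

import Mathlib

/-- Apply a `k`-block substitution blockwise to a finite word, dropping the
trailing partial block (the paper's truncation convention). -/
def blockApply (k : Nat) (sigma : List Bool -> List Bool) (w : List Bool) : List Bool :=
  if h : 0 < k && k <= w.length then
    sigma (w.take k) ++ blockApply k sigma (w.drop k)
  else []
termination_by w.length
decreasing_by
  simp only [Bool.and_eq_true, decide_eq_true_eq] at h
  simp [List.length_drop]
  omega

/-- The length-`m` prefix of an infinite binary word. -/
def prefixOf (u : Nat -> Bool) (m : Nat) : List Bool := List.ofFn fun i : Fin m => u i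

/-- Value of a finite binary word read as binary digits after the point. -/
noncomputable def valFin (w : List Bool) : ℝ :=
  (((List.range w.length).zip w).map fun p => if p.2 then ((2:ℝ))⁻¹ ^ (p.1 + 1) else 0).sum

/-- Value of an infinite binary word read as binary digits after the point. -/
noncomputable def valInf (u : Nat -> Bool) : ℝ :=
  ∑' i : Nat, if u i then ((2:ℝ))⁻¹ ^ (i + 1) else 0

/-- A word is not eventually zero (it has infinitely many ones). -/
def NEZ (u : Nat -> Bool) : Prop := ∀ n, ∃ m, n ≤ m ∧ u m = true

open Classical in
/-- The unique binary expansion of `x ∈ (0,1]` not ending in `0^∞`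
(junk value, the zero word, if no such expansion exists). -/
noncomputable def tilde (x : ℝ) : Nat -> Bool :=
  if h : ∃ u : Nat -> Bool, NEZ u ∧ valInf u = x then h.choose else fun _ => false

open Classical in
/-- The interval map induced by the erasing `k`-block substitution `sigma`
(with erased block `weps`) acting on binary expansions: `f x = 0.sigma(x̃)`,
with value `0` at `x = 0` (no expansion not ending in `0^∞`) and when
`x̃ = weps^∞`. -/
noncomputable def fSigma (k : Nat) (sigma : List Bool -> List Bool) (weps : List Bool)
    (x : ℝ) : ℝ :=
  if (¬ ∃ u : Nat -> Bool, NEZ u ∧ valInf u = x) ∨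
     (∀ i : Nat, tilde x i = weps.getD (i % k) false) then 0
  else ⨆ n : Nat, valFin (blockApply k sigma (prefixOf (tilde x) (n * k)))

/-- Dyadic rationals (in particular all of `Q₂⁰` within `[0,1]`). -/
def Dyadic01 : Set ℝ := {x | ∃ a b : Nat, x = (a : ℝ) / 2 ^ b}

lemma summable_geom_half : Summable (fun i : ℕ => ((2:ℝ))⁻¹ ^ (i+1)) := by
  have h : Summable (fun i : ℕ => ((2:ℝ))⁻¹ ^ i) :=
    summable_geometric_of_lt_one (by norm_num) (by norm_num)
  exact (h.mul_right ((2:ℝ))⁻¹).congr (fun i => by rw [pow_succ])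

lemma summable_val (u : ℕ → Bool) :
    Summable (fun i : ℕ => if u i then ((2:ℝ))⁻¹ ^ (i + 1) else 0) := by
  refine Summable.of_nonneg_of_le (fun i => ?_) (fun i => ?_) summable_geom_half
  · split <;> positivity
  · split <;> [exact le_rfl; positivity]

lemma tsum_geom_half : ∑' i : ℕ, ((2:ℝ))⁻¹ ^ (i+1) = 1 := by
  have h : ∑' i : ℕ, ((2:ℝ))⁻¹ ^ i = 2 := by
    rw [tsum_geometric_of_lt_one (by norm_num) (by norm_num)]; norm_num
  have h2 : Summable (fun i : ℕ => ((2:ℝ))⁻¹ ^ i) :=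
    summable_geometric_of_lt_one (by norm_num) (by norm_num)
  calc ∑' i : ℕ, ((2:ℝ))⁻¹ ^ (i+1) = ∑' i : ℕ, ((2:ℝ))⁻¹ ^ i * 2⁻¹ :=
        tsum_congr (fun i => by rw [pow_succ])
    _ = 2 * 2⁻¹ := by rw [h2.tsum_mul_right, h]
    _ = 1 := by norm_num

lemma valInf_nonneg (u : ℕ → Bool) : 0 ≤ valInf u :=
  tsum_nonneg (fun i => by split <;> positivity)

lemma valInf_le_one (u : ℕ → Bool) : valInf u ≤ 1 := by
  rw [← tsum_geom_half]
  exact Summable.tsum_le_tsum (fun i => by split <;> [exact le_rfl; positivity])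
    (summable_val u) summable_geom_half

lemma valFin_nil : valFin [] = 0 := by simp [valFin]

lemma valFin_append_single (w : List Bool) (b : Bool) :
    valFin (w ++ [b]) = valFin w + (if b then ((2:ℝ))⁻¹ ^ (w.length + 1) else 0) := by
  simp only [valFin, List.length_append, List.length_singleton, List.range_succ]
  rw [List.zip_append (by simp)]
  simp

lemma valFin_nonneg (w : List Bool) : 0 ≤ valFin w := by
  rw [valFin]
  apply List.sum_nonneg
  intro x hx
  simp only [List.mem_map] at hx
  obtain ⟨p, _, rfl⟩ := hx
  split <;> positivity

lemma valFin_append (w z : List Bool) :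
    valFin (w ++ z) = valFin w + ((2:ℝ))⁻¹ ^ w.length * valFin z := by
  induction z using List.reverseRecOn with
  | nil => simp [valFin_nil]
  | append_singleton z b ih =>
      rw [← List.append_assoc, valFin_append_single, ih, valFin_append_single,
        List.length_append]
      split
      · rw [pow_add]; ring
      · ring

lemma le_valFin_append (w z : List Bool) : valFin w ≤ valFin (w ++ z) := by
  rw [valFin_append]
  have h := valFin_nonneg z
  have h2 : (0:ℝ) ≤ ((2:ℝ))⁻¹ ^ w.length * valFin z := mul_nonneg (by positivity) h
  linarith

lemma prefixOf_zero (u : ℕ → Bool) : prefixOf u 0 = [] := rfl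

lemma prefixOf_length (u : ℕ → Bool) (m : ℕ) : (prefixOf u m).length = m := by
  simp [prefixOf]

lemma prefixOf_succ (u : ℕ → Bool) (m : ℕ) :
    prefixOf u (m+1) = prefixOf u m ++ [u m] := by
  simp only [prefixOf]
  rw [List.ofFn_succ']
  simp [List.concat_eq_append]

lemma valInf_shift (u : ℕ → Bool) :
    valInf u = (if u 0 then (2:ℝ)⁻¹ else 0) + 2⁻¹ * valInf (fun n => u (n+1)) := by
  rw [valInf, Summable.tsum_eq_zero_add (summable_val u)]
  congr 1
  · simp
  · rw [valInf, ← Summable.tsum_mul_left _ (summable_val _)]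
    apply tsum_congr
    intro i
    split <;> simp [pow_succ] <;> ring

lemma valInf_decomp (u : ℕ → Bool) (m : ℕ) :
    valInf u = valFin (prefixOf u m) + (2:ℝ)⁻¹ ^ m * valInf (fun n => u (m + n)) := by
  induction m with
  | zero => simp [prefixOf_zero, valFin_nil]
  | succ m ih =>
      rw [ih, prefixOf_succ, valFin_append_single, valInf_shift (fun n => u (m + n))]
      have he : (fun n => u (m + (n+1))) = (fun n => u (m + 1 + n)) := by
        funext n; congr 1; omega
      rw [he]
      rw [prefixOf_length]
      simp only [Nat.add_zero]
      split <;> (simp only [pow_succ]; ring)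

lemma valInf_pos (u : ℕ → Bool) {m : ℕ} (hm : u m = true) : 0 < valInf u := by
  have h := Summable.le_tsum (summable_val u) m (fun j _ => by split <;> positivity)
  rw [hm] at h
  simp only [if_true] at h
  calc (0:ℝ) < 2⁻¹ ^ (m+1) := by positivity
    _ ≤ valInf u := h

lemma valFin_prefix_lt_valInf (u : ℕ → Bool) (hu : NEZ u) (m : ℕ) :
    valFin (prefixOf u m) < valInf u := by
  obtain ⟨i, hi, hti⟩ := hu m
  have h := valInf_decomp u m
  have hpos : 0 < valInf (fun n => u (m + n)) := by
    apply valInf_pos (m := i - m)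
    rw [show m + (i - m) = i by omega, hti]
  nlinarith [pow_pos (by norm_num : (0:ℝ) < 2⁻¹) m]

lemma valInf_le_prefix_add (u : ℕ → Bool) (m : ℕ) :
    valInf u ≤ valFin (prefixOf u m) + (2:ℝ)⁻¹ ^ m := by
  have h := valInf_decomp u m
  nlinarith [valInf_le_one (fun n => u (m + n)), pow_pos (by norm_num : (0:ℝ) < 2⁻¹) m,
    valInf_nonneg (fun n => u (m+n))]

lemma valInf_lt_of_lt (u u' : ℕ → Bool) (hu : NEZ u) (i : ℕ)
    (hag : ∀ j < i, u j = u' j) (hi : u i = true) (hi' : u' i = false) :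
    valInf u' < valInf u := by
  have hpre : prefixOf u i = prefixOf u' i := by
    simp only [prefixOf]
    congr 1
    funext j
    exact hag j j.isLt
  have h1 : valInf u' ≤ valFin (prefixOf u' (i+1)) + (2:ℝ)⁻¹ ^ (i+1) :=
    valInf_le_prefix_add u' (i+1)
  have h2 : valFin (prefixOf u (i+1)) < valInf u := valFin_prefix_lt_valInf u hu (i+1)
  rw [prefixOf_succ, valFin_append_single, hi', prefixOf_length] at h1
  rw [prefixOf_succ, valFin_append_single, hi, prefixOf_length, hpre] at h2
  norm_num at h1 h2
  linarith

lemma valInf_injOn (u u' : ℕ → Bool) (hu : NEZ u) (hu' : NEZ u')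
    (h : valInf u = valInf u') : u = u' := by
  by_contra hne
  have hex : ∃ i, u i ≠ u' i := by
    by_contra hc
    push_neg at hc
    exact hne (funext hc)
  classical
  let i := Nat.find hex
  have hi : u i ≠ u' i := Nat.find_spec hex
  have hag : ∀ j < i, u j = u' j := by
    intro j hj
    have := Nat.find_min hex hj
    simpa using this
  cases hui : u i with
  | false =>
      have hui' : u' i = true := by
        cases h' : u' i
        · exact absurd (hui.trans h'.symm) hi
        · rfl
      have := valInf_lt_of_lt u' u hu' i (fun j hj => (hag j hj).symm) hui' hui
      linarith
  | true =>
      have hui' : u' i = false := by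
        cases h' : u' i
        · rfl
        · exact absurd (hui.trans h'.symm) hi
      have := valInf_lt_of_lt u u' hu i hag hui hui'
      linarith

def blockAt (k : ℕ) (u : ℕ → Bool) (p : ℕ) : List Bool :=
  List.ofFn fun i : Fin k => u (p * k + i)

lemma blockAt_length (k : ℕ) (u : ℕ → Bool) (p : ℕ) : (blockAt k u p).length = k := by
  simp [blockAt]

lemma blockApply_nil (k : ℕ) (sigma : List Bool → List Bool) (hk : 0 < k) :
    blockApply k sigma [] = [] := by
  rw [blockApply]
  rw [dif_neg]
  simp
  omega

lemma blockApply_block (k : ℕ) (sigma : List Bool → List Bool) (w z : List Bool)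
    (hk : 0 < k) (hw : w.length = k) :
    blockApply k sigma (w ++ z) = sigma w ++ blockApply k sigma z := by
  rw [blockApply]
  rw [dif_pos (by simp [List.length_append, hw, hk])]
  rw [List.take_left' hw, List.drop_left' hw]

lemma blockApply_join (k : ℕ) (sigma : List Bool → List Bool) (hk : 0 < k)
    (L : List (List Bool)) (hL : ∀ w ∈ L, w.length = k) :
    blockApply k sigma L.flatten = (L.map sigma).flatten := by
  induction L with
  | nil => simp [blockApply_nil k sigma hk]
  | cons w L ih =>
      rw [List.flatten_cons, List.map_cons, List.flatten_cons]
      rw [blockApply_block k sigma w L.flatten hk (hL w (by simp))]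
      rw [ih (fun w hw => hL w (by simp [hw]))]

lemma prefixOf_mul (k : ℕ) (u : ℕ → Bool) (m : ℕ) :
    prefixOf u (m * k) = ((List.range m).map (blockAt k u)).flatten := by
  induction m with
  | zero => simp [prefixOf]
  | succ m ih =>
      rw [List.range_succ, List.map_append, List.flatten_append]
      rw [← ih]
      apply List.ext_getElem
      · simp [prefixOf, blockAt, Nat.succ_mul]
      · intro i h1 h2
        simp only [prefixOf, blockAt, List.getElem_ofFn]
        rw [List.getElem_append]
        split
        · simp only [prefixOf, List.getElem_ofFn]
        · rename_i hlt
          simp only [prefixOf, List.length_ofFn, not_lt] at hlt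
          simp only [List.flatten_cons, List.flatten_nil, List.map_cons, List.map_nil,
            List.append_nil, List.getElem_ofFn, blockAt]
          congr 1
          simp only [prefixOf, List.length_ofFn]
          omega

open Classical in
noncomputable def tauOf (a : ℕ → ℕ) (m : ℕ) : ℕ :=
  ((Finset.range m).filter (fun p => ∃ t, a t = p)).card

open Classical in
lemma tauOf_apply (a : ℕ → ℕ) (ha : StrictMono a) (t : ℕ) : tauOf a (a t) = t := by
  classical
  rw [tauOf]
  have : ((Finset.range (a t)).filter (fun p => ∃ s, a s = p)) = (Finset.range t).image a := by
    ext p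
    simp only [Finset.mem_filter, Finset.mem_range, Finset.mem_image]
    constructor
    · rintro ⟨hp, s, rfl⟩
      exact ⟨s, ha.lt_iff_lt.mp hp, rfl⟩
    · rintro ⟨s, hs, rfl⟩
      exact ⟨ha hs, s, rfl⟩
  rw [this, Finset.card_image_of_injective _ ha.injective, Finset.card_range]

open Classical in
lemma tauOf_succ (a : ℕ → ℕ) (m : ℕ) :
    tauOf a (m+1) = tauOf a m + (if ∃ t, a t = m then 1 else 0) := by
  classical
  rw [tauOf, tauOf, Finset.range_add_one, Finset.filter_insert]
  split
  · rw [Finset.card_insert_of_notMem (by simp)]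
  · simp

lemma tauOf_surjective (a : ℕ → ℕ) (ha : StrictMono a) : Function.Surjective (tauOf a) :=
  fun t => ⟨a t, tauOf_apply a ha t⟩

/-- core lemma: blockwise image only depends on anchor blocks -/

lemma core_join (sigma : List Bool → List Bool) (D : ℕ → List Bool) (a : ℕ → ℕ)
    (ha : StrictMono a) (hW : ∀ p, (¬ ∃ t, a t = p) → sigma (D p) = []) (m : ℕ) :
    ((List.range m).map (fun p => sigma (D p))).flatten
      = ((List.range (tauOf a m)).map (fun s => sigma (D (a s)))).flatten := by
  classical
  induction m with
  | zero => simp [tauOf]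
  | succ m ih =>
      rw [List.range_succ, List.map_append, List.flatten_append, ih, tauOf_succ]
      split
      · rename_i h
        obtain ⟨t, rfl⟩ := h
        rw [tauOf_apply a ha, List.range_succ, List.map_append, List.flatten_append]
        simp
      · rename_i h
        simp [hW m h]

lemma dyadic_zero : (0:ℝ) ∈ Dyadic01 := ⟨0, 0, by norm_num⟩

lemma dyadic_add {x y : ℝ} (hx : x ∈ Dyadic01) (hy : y ∈ Dyadic01) : x + y ∈ Dyadic01 := by
  obtain ⟨a, b, rfl⟩ := hx
  obtain ⟨c, d, rfl⟩ := hy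
  refine ⟨a * 2 ^ d + c * 2 ^ b, b + d, ?_⟩
  push_cast
  rw [pow_add]
  field_simp

lemma valFin_dyadic (w : List Bool) : valFin w ∈ Dyadic01 := by
  induction w using List.reverseRecOn with
  | nil => rw [valFin_nil]; exact dyadic_zero
  | append_singleton w b ih =>
      rw [valFin_append_single]
      apply dyadic_add ih
      split
      · exact ⟨1, w.length + 1, by rw [inv_pow]; norm_num⟩
      · exact dyadic_zero

lemma ciSup_eventually_const {f : ℕ → ℝ} (N : ℕ) (hmono : Monotone f)
    (hconst : ∀ n, N ≤ n → f n = f N) : (⨆ n, f n) = f N := by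
  apply le_antisymm
  · apply ciSup_le
    intro n
    rcases le_or_gt n N with h | h
    · exact hmono h
    · exact le_of_eq (hconst n h.le)
  · apply le_ciSup (f := f)
    refine ⟨f N, ?_⟩
    rintro y ⟨n, rfl⟩
    rcases le_or_gt n N with h | h
    · exact hmono h
    · exact le_of_eq (hconst n h.le)

lemma ofFn_getD (k : ℕ) (L : List Bool) (hL : L.length = k) :
    (List.ofFn fun i : Fin k => L.getD i false) = L := by
  apply List.ext_getElem
  · simp [hL]
  · intro i h1 h2
    simp only [List.getElem_ofFn]
    rw [List.getD_eq_getElem L false h2]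

def cntOf (S : ℕ → Bool) (t : ℕ) : ℕ := ∑ s ∈ Finset.range t, (if S s then 1 else 0)

def aOf (j : ℕ → ℕ) (S : ℕ → Bool) (t : ℕ) : ℕ := j t + cntOf S (t + 1)

open Classical in
noncomputable def BOf (k : ℕ) (u0 : ℕ → Bool) (weps : List Bool) (j : ℕ → ℕ)
    (S : ℕ → Bool) (p : ℕ) : List Bool :=
  if ∃ t, aOf j S t = p then blockAt k u0 (j (tauOf (aOf j S) p)) else weps

noncomputable def uOf (k : ℕ) (u0 : ℕ → Bool) (weps : List Bool) (j : ℕ → ℕ)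
    (S : ℕ → Bool) (n : ℕ) : Bool :=
  (BOf k u0 weps j S (n / k)).getD (n % k) false

lemma cntOf_mono (S : ℕ → Bool) : Monotone (cntOf S) := by
  intro s t hst
  exact Finset.sum_le_sum_of_subset (Finset.range_subset_range.mpr hst)

lemma cntOf_succ (S : ℕ → Bool) (t : ℕ) :
    cntOf S (t + 1) = cntOf S t + (if S t then 1 else 0) := Finset.sum_range_succ _ t

lemma cntOf_congr (S S' : ℕ → Bool) (t : ℕ) (h : ∀ s < t, S s = S' s) :
    cntOf S t = cntOf S' t := by
  apply Finset.sum_congr rfl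
  intro s hs
  rw [h s (Finset.mem_range.mp hs)]

lemma aOf_strictMono (j : ℕ → ℕ) (S : ℕ → Bool) (hj : StrictMono j) :
    StrictMono (aOf j S) := by
  apply strictMono_nat_of_lt_succ
  intro t
  have h1 : j t < j (t+1) := hj (Nat.lt_succ_self t)
  have h2 : cntOf S (t+1) ≤ cntOf S (t+1+1) := cntOf_mono S (by omega)
  simp only [aOf]
  omega

lemma BOf_anchor (k : ℕ) (u0 : ℕ → Bool) (weps : List Bool) (j : ℕ → ℕ) (S : ℕ → Bool)
    (hj : StrictMono j) (s : ℕ) :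
    BOf k u0 weps j S (aOf j S s) = blockAt k u0 (j s) := by
  rw [BOf, if_pos ⟨s, rfl⟩, tauOf_apply _ (aOf_strictMono j S hj)]

lemma BOf_nonanchor (k : ℕ) (u0 : ℕ → Bool) (weps : List Bool) (j : ℕ → ℕ) (S : ℕ → Bool)
    (p : ℕ) (h : ¬ ∃ t, aOf j S t = p) : BOf k u0 weps j S p = weps := by
  rw [BOf, if_neg h]

lemma BOf_length (k : ℕ) (u0 : ℕ → Bool) (weps : List Bool) (j : ℕ → ℕ) (S : ℕ → Bool)
    (p : ℕ) (hlen : weps.length = k) : (BOf k u0 weps j S p).length = k := by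
  rw [BOf]
  split
  · exact blockAt_length k u0 _
  · exact hlen

lemma mydiv_helper (k p r : ℕ) (hk : 0 < k) (hr : r < k) : (p * k + r) / k = p := by
  have h1 : p * k + r = r + k * p := by ring
  rw [h1, Nat.add_mul_div_left _ _ hk, Nat.div_eq_of_lt hr]
  omega

lemma mymod_helper (k p r : ℕ) (hr : r < k) : (p * k + r) % k = r := by
  have h1 : p * k + r = r + k * p := by ring
  rw [h1, Nat.add_mul_mod_self_left, Nat.mod_eq_of_lt hr]

lemma blockAt_uOf (k : ℕ) (u0 : ℕ → Bool) (weps : List Bool) (j : ℕ → ℕ) (S : ℕ → Bool)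
    (p : ℕ) (hk : 0 < k) (hlen : weps.length = k) :
    blockAt k (uOf k u0 weps j S) p = BOf k u0 weps j S p := by
  rw [blockAt]
  have h : ∀ i : Fin k, uOf k u0 weps j S (p * k + i) = (BOf k u0 weps j S p).getD i false := by
    intro i
    rw [uOf, mydiv_helper k p i hk i.isLt, mymod_helper k p i i.isLt]
  calc (List.ofFn fun i : Fin k => uOf k u0 weps j S (p * k + i))
      = List.ofFn fun i : Fin k => (BOf k u0 weps j S p).getD i false := by
        congr 1; funext i; exact h i
    _ = BOf k u0 weps j S p := ofFn_getD k _ (BOf_length k u0 weps j S p hlen)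

lemma uOf_inj (k : ℕ) (u0 : ℕ → Bool) (weps : List Bool) (j : ℕ → ℕ)
    (hj : StrictMono j) (hk : 0 < k) (hlen : weps.length = k)
    (hJ : ∀ s, blockAt k u0 (j s) ≠ weps)
    (S S' : ℕ → Bool) (h : uOf k u0 weps j S = uOf k u0 weps j S') : S = S' := by
  have hB : ∀ p, BOf k u0 weps j S p = BOf k u0 weps j S' p := by
    intro p
    rw [← blockAt_uOf k u0 weps j S p hk hlen, ← blockAt_uOf k u0 weps j S' p hk hlen, h]
  -- helper for the asymmetric case
  have key : ∀ T T' : ℕ → Bool, (∀ p, BOf k u0 weps j T p = BOf k u0 weps j T' p) →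
      ∀ t0, (∀ s < t0, T s = T' s) → T t0 = true → T' t0 = false → False := by
    intro T T' hBT t0 hag ht hT'
    have hcnt : ∀ s ≤ t0, cntOf T s = cntOf T' s := by
      intro s hs
      exact cntOf_congr T T' s (fun r hr => hag r (by omega))
    have hcnt1 : cntOf T (t0+1) = cntOf T' (t0+1) + 1 := by
      rw [cntOf_succ, cntOf_succ, ht, hT', hcnt t0 le_rfl]
      simp
    have haa : aOf j T t0 = aOf j T' t0 + 1 := by
      simp only [aOf, hcnt1]; omega
    set p := aOf j T' t0 with hp
    have hB1 : BOf k u0 weps j T' p = blockAt k u0 (j t0) := BOf_anchor k u0 weps j T' hj t0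
    have hB2 : BOf k u0 weps j T p = weps := by
      apply BOf_nonanchor
      rintro ⟨r, hr⟩
      rcases lt_trichotomy r t0 with hlt | rfl | hgt
      · have heq : aOf j T r = aOf j T' r := by
          simp only [aOf]
          rw [cntOf_congr T T' (r+1) (fun q hq => hag q (by omega))]
        have : aOf j T' r < aOf j T' t0 := aOf_strictMono j T' hj hlt
        omega
      · omega
      · have : aOf j T t0 < aOf j T r := aOf_strictMono j T hj hgt
        omega
    rw [hBT p, hB1] at hB2
    exact hJ t0 hB2
  by_contra hne
  have hex : ∃ t, S t ≠ S' t := by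
    by_contra hc
    push_neg at hc
    exact hne (funext hc)
  set t0 := Nat.find hex with ht0
  have hagq : ∀ s < t0, S s = S' s := by
    intro s hs
    have := Nat.find_min hex hs
    simpa using this
  have hd : S t0 ≠ S' t0 := Nat.find_spec hex
  cases hS : S t0 with
  | true =>
      have hS' : S' t0 = false := by
        cases h' : S' t0
        · rfl
        · exact absurd (hS.trans h'.symm) hd
      exact key S S' hB t0 hagq hS hS'
  | false =>
      have hS' : S' t0 = true := by
        cases h' : S' t0
        · exact absurd (hS.trans h'.symm) hd
        · rfl
      exact key S' S (fun p => (hB p).symm) t0 (fun s hs => (hagq s hs).symm) hS' hS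

lemma NEZ_uOf (k : ℕ) (u0 : ℕ → Bool) (weps : List Bool) (S : ℕ → Bool)
    (hk : 0 < k) (hlen : weps.length = k) (hu0 : NEZ u0)
    (hJinf : {m | blockAt k u0 m ≠ weps}.Infinite) :
    NEZ (uOf k u0 weps (Nat.nth fun m => blockAt k u0 m ≠ weps) S) := by
  classical
  set J := fun m => blockAt k u0 m ≠ weps with hJdef
  set j := Nat.nth J with hjdef
  have hjmono : StrictMono j := Nat.nth_strictMono hJinf
  intro n
  -- find a one of u0 beyond block j n
  obtain ⟨i, hi, hione⟩ := hu0 ((j n + 1) * k)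
  set m0 := i / k with hm0
  have hm0ge : j n + 1 ≤ m0 := by
    rw [hm0, Nat.le_div_iff_mul_le hk]
    exact hi
  set r := i % k with hr
  have hrk : r < k := Nat.mod_lt _ hk
  have hieq : i = m0 * k + r := by
    rw [hm0, hr, Nat.mul_comm]
    exact (Nat.div_add_mod i k).symm
  -- the bit inside block m0
  have hbit : ∀ p : ℕ, BOf k u0 weps j S p = blockAt k u0 m0 ∨ BOf k u0 weps j S p = weps →
      True := fun _ _ => trivial
  by_cases hmJ : J m0
  · -- anchor case
    set s := Nat.count J m0 with hs
    have hjs : j s = m0 := Nat.nth_count hmJ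
    have hsn : n < s := by
      have : j n < j s := by rw [hjs]; omega
      exact hjmono.lt_iff_lt.mp this
    set p := aOf j S s with hp
    have hBp : BOf k u0 weps j S p = blockAt k u0 m0 := by
      rw [hp, BOf_anchor k u0 weps j S hjmono s, hjs]
    refine ⟨p * k + r, ?_, ?_⟩
    · have h1 : s ≤ j s := hjmono.le_apply
      have h2 : j s ≤ p := by rw [hp]; simp [aOf]
      have h3 : p ≤ p * k := Nat.le_mul_of_pos_right p hk
      omega
    · rw [uOf, mydiv_helper k p r hk hrk, mymod_helper k p r hrk, hBp]
      rw [blockAt, List.getD_eq_getElem _ _ (by simp [hrk])]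
      simp only [List.getElem_ofFn]
      rw [← hieq]
      exact hione
  · -- non-anchor case: block m0 of u0 is weps
    have hDm0 : blockAt k u0 m0 = weps := by
      by_contra hc
      exact hmJ hc
    set c := Nat.count J m0 with hc
    have hjc : m0 + 1 ≤ j c := by
      have hcount : Nat.count J (m0 + 1) = c := by
        rw [Nat.count_succ]
        simp [hmJ]
        exact hc.symm
      have := (Nat.count_le_iff_le_nth hJinf (a := m0 + 1) (b := c)).mp (le_of_eq hcount)
      exact this
    have hjtlt : ∀ t < c, j t < m0 := by
      intro t ht
      exact Nat.nth_lt_of_lt_count (by omega)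
    set p := m0 + cntOf S c with hp
    have hnon : ¬ ∃ t, aOf j S t = p := by
      rintro ⟨t, hT⟩
      rcases lt_or_ge t c with hlt | hge
      · have h1 : j t < m0 := hjtlt t hlt
        have h2 : cntOf S (t+1) ≤ cntOf S c := cntOf_mono S (by omega)
        simp only [aOf] at hT
        omega
      · have h1 : aOf j S c ≤ aOf j S t := (aOf_strictMono j S hjmono).monotone hge
        have h2 : cntOf S c ≤ cntOf S (c+1) := cntOf_mono S (by omega)
        simp only [aOf] at h1 hT
        omega
    have hBp : BOf k u0 weps j S p = weps := BOf_nonanchor k u0 weps j S p hnon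
    refine ⟨p * k + r, ?_, ?_⟩
    · have h3 : p ≤ p * k := Nat.le_mul_of_pos_right p hk
      have h1 : n ≤ j n := hjmono.le_apply
      omega
    · rw [uOf, mydiv_helper k p r hk hrk, mymod_helper k p r hrk, hBp, ← hDm0]
      rw [blockAt, List.getD_eq_getElem _ _ (by simp [hrk])]
      simp only [List.getElem_ofFn]
      rw [← hieq]
      exact hione


/-- every non-dyadic point of the image of `fSigma` has an
uncountable fiber. -/
theorem fSigma_fibers_uncountable
    (k : Nat) (sigma : List Bool -> List Bool) (weps : List Bool)
    (hk : 2 ≤ k) (hlen : weps.length = k)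
    (hne1 : weps ≠ List.replicate k true)
    (herase : ∀ w : List Bool, w.length = k → (sigma w = [] ↔ w = weps)) :
    ∀ x ∈ fSigma k sigma weps '' Set.Icc 0 1, x ∉ Dyadic01 →
      ¬ (Set.Icc (0:ℝ) 1 ∩ fSigma k sigma weps ⁻¹' {x}).Countable := by
  classical
  intro x hx hxd hC
  obtain ⟨y, hy01, hyx⟩ := hx
  have hk0 : 0 < k := by omega
  have hx0 : x ≠ 0 := fun h => hxd (by rw [h]; exact dyadic_zero)
  by_cases hcond : (¬ ∃ u : Nat → Bool, NEZ u ∧ valInf u = y) ∨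
      (∀ i : Nat, tilde y i = weps.getD (i % k) false)
  · simp only [fSigma] at hyx
    rw [if_pos hcond] at hyx
    exact hx0 hyx.symm
  have hcond' := hcond
  push_neg at hcond'
  obtain ⟨hex, hne_all⟩ := hcond'
  set u0 : ℕ → Bool := tilde y with hu0def
  have hu0spec : NEZ u0 ∧ valInf u0 = y := by
    have h1 : tilde y = hex.choose := by simp only [tilde]; rw [dif_pos hex]
    rw [hu0def, h1]
    exact hex.choose_spec
  have hxsup : x = ⨆ n : ℕ, valFin (blockApply k sigma (prefixOf u0 (n * k))) := by
    rw [← hyx]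
    simp only [fSigma]
    rw [if_neg hcond]
  have hDlen : ∀ p, (blockAt k u0 p).length = k := fun p => blockAt_length k u0 p
  have hsig : ∀ p, blockAt k u0 p = weps → sigma (blockAt k u0 p) = [] :=
    fun p hp => (herase _ (hDlen p)).mpr hp
  have hblock : ∀ (u : ℕ → Bool) (n : ℕ), blockApply k sigma (prefixOf u (n * k)) =
      ((List.range n).map (fun p => sigma (blockAt k u p))).flatten := by
    intro u n
    rw [prefixOf_mul k u n, blockApply_join k sigma hk0]
    · rw [List.map_map]
      rfl
    · intro w hw
      simp only [List.mem_map] at hw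
      obtain ⟨p, _, rfl⟩ := hw
      exact blockAt_length k u p
  -- the set of non-erased blocks is infinite (else x would be dyadic)
  have hJinf : {m | blockAt k u0 m ≠ weps}.Infinite := by
    by_contra hfin
    rw [Set.not_infinite] at hfin
    obtain ⟨N, hN⟩ := hfin.bddAbove
    have hNall : ∀ m, N + 1 ≤ m → blockAt k u0 m = weps := by
      intro m hm
      by_contra hc
      have h2 := hN (show m ∈ {m | blockAt k u0 m ≠ weps} from hc)
      omega
    have hFnsucc : ∀ n : ℕ, ((List.range (n+1)).map (fun p => sigma (blockAt k u0 p))).flatten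
        = ((List.range n).map (fun p => sigma (blockAt k u0 p))).flatten ++ sigma (blockAt k u0 n) := by
      intro n
      rw [List.range_succ, List.map_append, List.flatten_append]
      simp
    have hconst : ∀ n, N + 1 ≤ n →
        ((List.range n).map (fun p => sigma (blockAt k u0 p))).flatten
          = ((List.range (N+1)).map (fun p => sigma (blockAt k u0 p))).flatten := by
      intro n hn
      induction n, hn using Nat.le_induction with
      | base => rfl
      | succ n hn ih => rw [hFnsucc n, hsig n (hNall n hn), List.append_nil, ih]
    have hmono : Monotone fun n => valFin (((List.range n).map (fun p => sigma (blockAt k u0 p))).flatten) := by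
      apply monotone_nat_of_le_succ
      intro n
      rw [hFnsucc n]
      exact le_valFin_append _ _
    have hxv : x = valFin (((List.range (N+1)).map (fun p => sigma (blockAt k u0 p))).flatten) := by
      rw [hxsup]
      rw [iSup_congr (fun n => congrArg valFin (hblock u0 n))]
      exact ciSup_eventually_const (N+1) hmono (fun n hn => by rw [hconst n hn])
    exact hxd (hxv ▸ valFin_dyadic _)
  set j : ℕ → ℕ := Nat.nth (fun m => blockAt k u0 m ≠ weps) with hjdef
  have hjmono : StrictMono j := Nat.nth_strictMono hJinf
  have hjJ : ∀ s, blockAt k u0 (j s) ≠ weps := fun s => Nat.nth_mem_of_infinite hJinf s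
  have hjW : ∀ p, (¬ ∃ t, j t = p) → sigma (blockAt k u0 p) = [] := by
    intro p hp
    apply hsig
    by_contra hc
    have h2 : p ∈ Set.range j := by
      rw [hjdef, Nat.range_nth_of_infinite hJinf]
      exact hc
    obtain ⟨t, ht⟩ := h2
    exact hp ⟨t, ht⟩
  have hxG : x = ⨆ t : ℕ, valFin (((List.range t).map
      (fun s => sigma (blockAt k u0 (j s)))).flatten) := by
    rw [hxsup]
    have h1 : ∀ n, valFin (blockApply k sigma (prefixOf u0 (n*k)))
        = valFin (((List.range (tauOf j n)).map (fun s => sigma (blockAt k u0 (j s)))).flatten) := by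
      intro n
      rw [hblock u0 n, core_join sigma (blockAt k u0) j hjmono hjW n]
    rw [iSup_congr h1]
    exact (tauOf_surjective j hjmono).iSup_comp
      (g := fun t => valFin (((List.range t).map (fun s => sigma (blockAt k u0 (j s)))).flatten))
  -- the uncountable family of preimages
  have hNEZS : ∀ S : ℕ → Bool, NEZ (uOf k u0 weps j S) := fun S =>
    NEZ_uOf k u0 weps S hk0 hlen hu0spec.1 hJinf
  have htildeS : ∀ S : ℕ → Bool, tilde (valInf (uOf k u0 weps j S)) = uOf k u0 weps j S := by
    intro S
    have hexS : ∃ u, NEZ u ∧ valInf u = valInf (uOf k u0 weps j S) := ⟨_, hNEZS S, rfl⟩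
    have h1 : tilde (valInf (uOf k u0 weps j S)) = hexS.choose := by
      simp only [tilde]; rw [dif_pos hexS]
    have h2 := hexS.choose_spec
    rw [h1]
    exact valInf_injOn _ _ h2.1 (hNEZS S) h2.2
  have hfib : ∀ S : ℕ → Bool, fSigma k sigma weps (valInf (uOf k u0 weps j S)) = x := by
    intro S
    have hexS : ∃ u, NEZ u ∧ valInf u = valInf (uOf k u0 weps j S) := ⟨_, hNEZS S, rfl⟩
    have hnotall : ¬ ∀ i : ℕ, tilde (valInf (uOf k u0 weps j S)) i = weps.getD (i % k) false := by
      intro hall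
      have hblk : blockAt k (uOf k u0 weps j S) (aOf j S 0) = weps := by
        rw [blockAt]
        calc (List.ofFn fun i : Fin k => uOf k u0 weps j S ((aOf j S 0) * k + i))
            = List.ofFn fun i : Fin k => weps.getD i false := by
              congr 1
              funext i
              have h3 := hall ((aOf j S 0) * k + i)
              rw [htildeS S] at h3
              rw [h3, mymod_helper k _ _ i.isLt]
          _ = weps := ofFn_getD k weps hlen
      rw [blockAt_uOf k u0 weps j S _ hk0 hlen, BOf_anchor k u0 weps j S hjmono 0] at hblk
      exact hjJ 0 hblk
    simp only [fSigma]
    rw [if_neg (by rintro (h | h); exacts [h hexS, hnotall h])]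
    rw [htildeS S]
    have h1 : ∀ n, valFin (blockApply k sigma (prefixOf (uOf k u0 weps j S) (n*k)))
        = valFin (((List.range (tauOf (aOf j S) n)).map
            (fun s => sigma (blockAt k u0 (j s)))).flatten) := by
      intro n
      rw [hblock _ n, core_join sigma (blockAt k (uOf k u0 weps j S)) (aOf j S)
        (aOf_strictMono j S hjmono) ?_ n]
      · congr 2
        apply List.map_congr_left
        intro s _
        rw [blockAt_uOf k u0 weps j S _ hk0 hlen, BOf_anchor k u0 weps j S hjmono s]
      · intro p hp
        rw [blockAt_uOf k u0 weps j S p hk0 hlen, BOf_nonanchor k u0 weps j S p hp]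
        exact (herase weps hlen).mpr rfl
    rw [iSup_congr h1]
    rw [(tauOf_surjective _ (aOf_strictMono j S hjmono)).iSup_comp
      (g := fun t => valFin (((List.range t).map (fun s => sigma (blockAt k u0 (j s)))).flatten))]
    exact hxG.symm
  have hFinj : Function.Injective (fun S : ℕ → Bool => valInf (uOf k u0 weps j S)) := by
    intro S S' h
    exact uOf_inj k u0 weps j hjmono hk0 hlen hjJ S S'
      (valInf_injOn _ _ (hNEZS S) (hNEZS S') h)
  have hsub : Set.range (fun S : ℕ → Bool => valInf (uOf k u0 weps j S))
      ⊆ Set.Icc (0:ℝ) 1 ∩ fSigma k sigma weps ⁻¹' {x} := by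
    rintro _ ⟨S, rfl⟩
    exact ⟨⟨valInf_nonneg _, valInf_le_one _⟩, by simp [hfib S]⟩
  have hcnt := (hC.mono hsub).to_subtype
  have h2 : Countable (ℕ → Bool) :=
    Countable.of_equiv _ (Equiv.ofInjective _ hFinj).symm
  have e : (ℕ → Bool) ≃ Set ℕ :=
    { toFun := fun f => {n | f n = true}
      invFun := fun s => fun n => decide (n ∈ s)
      left_inv := fun f => funext fun n => by simp
      right_inv := fun s => by ext n; simp }
  have h3 : Countable (Set ℕ) := Countable.of_equiv _ e
  obtain ⟨g, hg⟩ := exists_injective_nat (Set ℕ)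
  exact Function.cantor_injective g hg
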